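/- Let k_1, k_2 ∈ ℝ. Then for every z in the closed unit disc of ℂ with z ≠ 1, the limit lim_{q↑1} (q^{k_1} z; q)_∞ / (q^{k_2} z; q)_∞ = (1 − z)^{k_2 − k_1} holds, where (a;q)_∞ = Π_{m=1}^∞ (1 − a q^m) and the power (1−z)^{k_2−k_1} is taken with the principal branch. -/

import Mathlib

open Complex Filter Set Topology

namespace QPoch


noncomputable def P (z : ℂ) (q x : ℝ) : ℂ := Complex.log (1 - ((q ^ x : ℝ) : ℂ) * z)

noncomputable def Phi (z : ℂ) (q x : ℝ) : ℂ :=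
  -(((q ^ x * Real.log q : ℝ) : ℂ) * z) / (1 - ((q ^ x : ℝ) : ℂ) * z)

lemma re_lt_one {z : ℂ} (hz1 : ‖z‖ ≤ 1) (hz2 : z ≠ 1) : z.re < 1 := by
  by_contra h
  push_neg at h
  have hre : z.re ≤ 1 := (Complex.re_le_norm z).trans hz1
  have hre1 : z.re = 1 := le_antisymm hre h
  have h2 : z.re ^ 2 + z.im ^ 2 ≤ 1 := by
    have := Complex.sq_norm z
    have h3 : ‖z‖ ^ 2 ≤ 1 := by
      have : ‖z‖ ≤ 1 := hz1
      nlinarith [norm_nonneg z]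
    rw [Complex.normSq_apply] at this
    nlinarith
  have him : z.im = 0 := by nlinarith
  exact hz2 (Complex.ext (by simp [hre1]) (by simp [him]))

lemma exists_rho_delta {z : ℂ} (hz1 : ‖z‖ ≤ 1) (hz2 : z ≠ 1) :
    ∃ ρ δ : ℝ, 1 < ρ ∧ 0 < δ ∧
      ∀ u : ℝ, u ∈ Set.Icc 0 ρ →
        (1 - (u : ℂ) * z) ∈ Complex.slitPlane ∧ δ ≤ ‖1 - (u : ℂ) * z‖ := by
  have hre : z.re < 1 := re_lt_one hz1 hz2
  set m : ℝ := min 1 ((1 - z.re) / 2) with hm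
  have hm0 : 0 < m := lt_min one_pos (by linarith)
  set ρ : ℝ := 1 + m with hρdef
  have hρ : 1 < ρ := by simp [hρdef]; linarith
  have hslit : ∀ u : ℝ, u ∈ Set.Icc 0 ρ → (1 - (u : ℂ) * z) ∈ Complex.slitPlane := by
    intro u hu
    obtain ⟨hu0, huρ⟩ := hu
    rw [Complex.mem_slitPlane_iff]
    rcases eq_or_lt_of_le hu0 with h0 | h0
    · left; simp [← h0]
    by_cases him : z.im = 0
    · left
      have hsre : (1 - (u : ℂ) * z).re = 1 - u * z.re := by simp
      rw [hsre]
      rcases le_or_gt z.re 0 with hzr | hzr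
      · nlinarith
      · have h1 : m ≤ (1 - z.re) / 2 := min_le_right _ _
        have h2 : u * z.re ≤ (1 + m) * z.re := by nlinarith
        nlinarith
    · right
      have : (1 - (u : ℂ) * z).im = -(u * z.im) := by simp
      rw [this]
      simp only [neg_ne_zero]
      positivity
  have hcont : ContinuousOn (fun u : ℝ => ‖1 - (u : ℂ) * z‖) (Set.Icc 0 ρ) := by
    fun_prop
  obtain ⟨u₀, hu₀, hmin⟩ := (isCompact_Icc (a := (0:ℝ)) (b := ρ)).exists_isMinOn
    (Set.nonempty_Icc.2 (by linarith)) hcont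
  refine ⟨ρ, ‖1 - (u₀ : ℂ) * z‖, hρ, ?_, fun u hu => ⟨hslit u hu, hmin hu⟩⟩
  have hne : (1 - (u₀ : ℂ) * z) ≠ 0 := Complex.slitPlane_ne_zero (hslit u₀ hu₀)
  exact norm_pos_iff.2 hne

lemma hasDerivAt_rpow_base {q : ℝ} (hq0 : 0 < q) (x : ℝ) :
    HasDerivAt (fun x : ℝ => ((q ^ x : ℝ) : ℂ)) ((q ^ x * Real.log q : ℝ) : ℂ) x :=
  (Real.hasStrictDerivAt_const_rpow hq0 x).hasDerivAt.ofReal_comp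

lemma hasDerivAt_inner {z : ℂ} {q : ℝ} (hq0 : 0 < q) (x : ℝ) :
    HasDerivAt (fun x : ℝ => 1 - ((q ^ x : ℝ) : ℂ) * z)
      (-(((q ^ x * Real.log q : ℝ) : ℂ) * z)) x :=
  ((hasDerivAt_rpow_base hq0 x).mul_const z).const_sub 1

lemma hasDerivAt_P {z : ℂ} {q x : ℝ} (hq0 : 0 < q)
    (hs : (1 - ((q ^ x : ℝ) : ℂ) * z) ∈ Complex.slitPlane) :
    HasDerivAt (P z q) (Phi z q x) x :=
  (hasDerivAt_inner hq0 x).clog_real hs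

lemma hasDerivAt_Phi {z : ℂ} {q x : ℝ} (hq0 : 0 < q)
    (hne : (1 - ((q ^ x : ℝ) : ℂ) * z) ≠ 0) :
    HasDerivAt (Phi z q)
      (-(((q ^ x * Real.log q ^ 2 : ℝ) : ℂ) * z) / (1 - ((q ^ x : ℝ) : ℂ) * z) ^ 2) x := by
  have h1 : HasDerivAt (fun x : ℝ => ((q ^ x * Real.log q : ℝ) : ℂ))
      (((q ^ x * Real.log q * Real.log q : ℝ) : ℂ)) x := by
    have := ((Real.hasStrictDerivAt_const_rpow hq0 x).hasDerivAt.mul_const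
      (Real.log q)).ofReal_comp
    simpa [mul_comm, mul_assoc, mul_left_comm] using this
  have hnum : HasDerivAt (fun x : ℝ => -(((q ^ x * Real.log q : ℝ) : ℂ) * z))
      (-(((q ^ x * Real.log q * Real.log q : ℝ) : ℂ) * z)) x := (h1.mul_const z).neg
  have hdiv := hnum.div (hasDerivAt_inner hq0 x) hne
  convert hdiv using 1
  · rfl
  · rfl
  have hden2 : ((1 : ℂ) - ((q ^ x : ℝ) : ℂ) * z) ^ 2 ≠ 0 := pow_ne_zero 2 hne
  push_cast
  ring

/-- MVT-style bound. -/
lemma mvt_norm {f f' : ℝ → ℂ} {a b C : ℝ} (hab : a ≤ b)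
    (hd : ∀ x ∈ Set.Icc a b, HasDerivAt f (f' x) x)
    (hb : ∀ x ∈ Set.Icc a b, ‖f' x‖ ≤ C) :
    ‖f b - f a‖ ≤ C * (b - a) := by
  have := Convex.norm_image_sub_le_of_norm_hasDerivWithin_le
    (f := f) (f' := f') (s := Set.Icc a b)
    (fun x hx => (hd x hx).hasDerivWithinAt) hb (convex_Icc a b)
    (Set.left_mem_Icc.2 hab) (Set.right_mem_Icc.2 hab)
  calc ‖f b - f a‖ ≤ C * ‖b - a‖ := this
  _ = C * (b - a) := by rw [Real.norm_eq_abs, _root_.abs_of_nonneg (by linarith)]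

lemma lip_log {z : ℂ} {ρ δ : ℝ} (hz1 : ‖z‖ ≤ 1) (hδ : 0 < δ)
    (H : ∀ u : ℝ, u ∈ Set.Icc 0 ρ →
      (1 - (u : ℂ) * z) ∈ Complex.slitPlane ∧ δ ≤ ‖1 - (u : ℂ) * z‖)
    {u v : ℝ} (hu : u ∈ Set.Icc 0 ρ) (hv : v ∈ Set.Icc 0 ρ) :
    ‖Complex.log (1 - (u : ℂ) * z) - Complex.log (1 - (v : ℂ) * z)‖ ≤ (1 / δ) * |u - v| := by
  have hd : ∀ w : ℝ, w ∈ Set.Icc 0 ρ →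
      HasDerivAt (fun w : ℝ => Complex.log (1 - (w : ℂ) * z))
        (-((1 : ℂ) * z) / (1 - (w : ℂ) * z)) w := by
    intro w hw
    have h0 : HasDerivAt (fun w : ℝ => ((w : ℝ) : ℂ)) 1 w := by
      simpa using (hasDerivAt_id w).ofReal_comp
    exact ((h0.mul_const z).const_sub 1).clog_real (H w hw).1
  have hbound : ∀ w : ℝ, w ∈ Set.Icc 0 ρ →
      ‖-((1 : ℂ) * z) / (1 - (w : ℂ) * z)‖ ≤ 1 / δ := by
    intro w hw
    rw [norm_div, norm_neg, one_mul]
    exact div_le_div₀ (by norm_num) hz1 hδ (H w hw).2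
  have := Convex.norm_image_sub_le_of_norm_hasDerivWithin_le
    (f := fun w : ℝ => Complex.log (1 - (w : ℂ) * z))
    (f' := fun w : ℝ => -((1 : ℂ) * z) / (1 - (w : ℂ) * z)) (s := Set.Icc 0 ρ)
    (fun x hx => (hd x hx).hasDerivWithinAt) hbound (convex_Icc 0 ρ) hv hu
  simpa [Real.norm_eq_abs] using this


noncomputable def A (z : ℂ) (q k : ℝ) : ℂ := ∑' m : ℕ, P z q (k + 1 + m)
lemma key_est {z : ℂ} {ρ δ : ℝ} (hz1 : ‖z‖ ≤ 1) (hρ : 1 < ρ) (hδ : 0 < δ)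
    (H : ∀ u : ℝ, u ∈ Set.Icc 0 ρ →
      (1 - (u : ℂ) * z) ∈ Complex.slitPlane ∧ δ ≤ ‖1 - (u : ℂ) * z‖)
    {q : ℝ} (hq0 : 0 < q) (hq1 : q < 1) {k₁ k₂ : ℝ} (hk : k₂ ≤ k₁)
    (hqb : q ^ (k₂ + 1) ≤ ρ) :
    ‖(A z q k₁ - A z q k₂) - ((k₂ - k₁ : ℝ) : ℂ) * Complex.log (1 - z)‖ ≤
      (k₁ - k₂) * ρ / δ ^ 2 * (Real.log q ^ 2 / (1 - q)) +
      (k₁ - k₂) / δ * (|q ^ (k₁ + 1) - 1| + |q ^ (k₂ + 1) - 1|) := by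
  have hk' : (0:ℝ) ≤ k₁ - k₂ := by linarith
  have h1q : (0:ℝ) < 1 - q := by linarith
  set b := k₂ + 1 with hbdef
  -- basic facts about the factors
  have hmem : ∀ x : ℝ, b ≤ x → (q ^ x : ℝ) ∈ Set.Icc 0 ρ := fun x hx =>
    ⟨Real.rpow_nonneg hq0.le x,
      le_trans (Real.rpow_le_rpow_of_exponent_ge hq0 hq1.le hx) hqb⟩
  have hslit : ∀ x : ℝ, b ≤ x → (1 - ((q ^ x : ℝ) : ℂ) * z) ∈ Complex.slitPlane :=
    fun x hx => (H _ (hmem x hx)).1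
  have hlow : ∀ x : ℝ, b ≤ x → δ ≤ ‖1 - ((q ^ x : ℝ) : ℂ) * z‖ :=
    fun x hx => (H _ (hmem x hx)).2
  have hne : ∀ x : ℝ, b ≤ x → (1 - ((q ^ x : ℝ) : ℂ) * z) ≠ 0 := by
    intro x hx h
    have := hlow x hx
    rw [h] at this
    simp only [norm_zero] at this
    linarith
  have hPd : ∀ x : ℝ, b ≤ x → HasDerivAt (P z q) (Phi z q x) x :=
    fun x hx => hasDerivAt_P hq0 (hslit x hx)
  have hPhid : ∀ x : ℝ, b ≤ x → HasDerivAt (Phi z q)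
      (-(((q ^ x * Real.log q ^ 2 : ℝ) : ℂ) * z) / (1 - ((q ^ x : ℝ) : ℂ) * z) ^ 2) x :=
    fun x hx => hasDerivAt_Phi hq0 (hne x hx)
  have hq_mono : ∀ {x y : ℝ}, x ≤ y → q ^ y ≤ q ^ x := fun {x y} hxy =>
    Real.rpow_le_rpow_of_exponent_ge hq0 hq1.le hxy
  have hqpos : ∀ x : ℝ, (0:ℝ) < q ^ x := fun x => Real.rpow_pos_of_pos hq0 x
  -- pointwise norm bounds
  have hnormP : ∀ x : ℝ, b ≤ x → ‖P z q x‖ ≤ q ^ x / δ := by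
    intro x hx
    have h0 : (0:ℝ) ∈ Set.Icc (0:ℝ) ρ := ⟨le_refl 0, by linarith⟩
    have h := lip_log hz1 hδ H (hmem x hx) h0
    simp only [Complex.ofReal_zero, zero_mul, sub_zero, Complex.log_one] at h
    rw [_root_.abs_of_nonneg (Real.rpow_nonneg hq0.le x)] at h
    simp only [P]
    calc ‖Complex.log (1 - ((q ^ x : ℝ) : ℂ) * z)‖ ≤ 1 / δ * q ^ x := h
    _ = q ^ x / δ := by ring
  have hnormPhi' : ∀ x : ℝ, b ≤ x →
      ‖-(((q ^ x * Real.log q ^ 2 : ℝ) : ℂ) * z) / (1 - ((q ^ x : ℝ) : ℂ) * z) ^ 2‖ ≤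
        Real.log q ^ 2 * q ^ x / δ ^ 2 := by
    intro x hx
    rw [norm_div, norm_neg, norm_mul, norm_pow]
    have hqx : (0:ℝ) ≤ q ^ x := Real.rpow_nonneg hq0.le x
    have h1 : ‖((q ^ x * Real.log q ^ 2 : ℝ) : ℂ)‖ * ‖z‖ ≤ Real.log q ^ 2 * q ^ x := by
      rw [Complex.norm_real, Real.norm_eq_abs, _root_.abs_of_nonneg (by positivity)]
      nlinarith [norm_nonneg z, mul_nonneg hqx (sq_nonneg (Real.log q))]
    have h2 : δ ^ 2 ≤ ‖1 - ((q ^ x : ℝ) : ℂ) * z‖ ^ 2 := by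
      have := hlow x hx
      nlinarith
    exact div_le_div₀ (by positivity) h1 (by positivity) h2
  -- difference of Phi at shifted points
  have hPhidiff : ∀ σ : ℝ, 0 ≤ σ →
      ‖Phi z q (k₁ + 1 + σ) - Phi z q (k₂ + 1 + σ)‖ ≤
        Real.log q ^ 2 * q ^ (b + σ) / δ ^ 2 * (k₁ - k₂) := by
    intro σ hσ
    have h1 : k₂ + 1 + σ ≤ k₁ + 1 + σ := by linarith
    have hbx : ∀ x ∈ Set.Icc (k₂ + 1 + σ) (k₁ + 1 + σ), b ≤ x := by
      intro x hx; rw [hbdef]; linarith [hx.1]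
    have h := mvt_norm (C := Real.log q ^ 2 * q ^ (b + σ) / δ ^ 2) h1
      (fun x hx => hPhid x (hbx x hx)) (fun x hx => by
        refine (hnormPhi' x (hbx x hx)).trans ?_
        have hmx : q ^ x ≤ q ^ (b + σ) := hq_mono (by rw [hbdef]; linarith [hx.1])
        gcongr)
    calc ‖Phi z q (k₁ + 1 + σ) - Phi z q (k₂ + 1 + σ)‖
        ≤ Real.log q ^ 2 * q ^ (b + σ) / δ ^ 2 * (k₁ + 1 + σ - (k₂ + 1 + σ)) := h
    _ = Real.log q ^ 2 * q ^ (b + σ) / δ ^ 2 * (k₁ - k₂) := by ring_nf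
  -- F and its derivative
  set F : ℝ → ℂ := fun s => P z q (k₁ + 1 + s) - P z q (k₂ + 1 + s) with hFdef
  have hb1 : ∀ s : ℝ, 0 ≤ s → b ≤ k₁ + 1 + s := fun s hs => by rw [hbdef]; linarith
  have hb2 : ∀ s : ℝ, 0 ≤ s → b ≤ k₂ + 1 + s := fun s hs => by rw [hbdef]; linarith
  have hFd : ∀ s : ℝ, 0 ≤ s →
      HasDerivAt F (Phi z q (k₁ + 1 + s) - Phi z q (k₂ + 1 + s)) s := by
    intro s hs
    exact (HasDerivAt.comp_const_add _ _ (hPd _ (hb1 s hs))).sub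
      (HasDerivAt.comp_const_add _ _ (hPd _ (hb2 s hs)))
  -- integrability
  have hPint : ∀ a c : ℝ, b ≤ a → b ≤ c →
      IntervalIntegrable (P z q) MeasureTheory.volume a c := by
    intro a c ha hc
    apply ContinuousOn.intervalIntegrable
    intro x hx
    rw [Set.mem_uIcc] at hx
    have hbx : b ≤ x := by rcases hx with ⟨h1, h2⟩ | ⟨h1, h2⟩ <;> linarith
    exact (hPd x hbx).continuousAt.continuousWithinAt
  have hFint : ∀ a c : ℝ, 0 ≤ a → 0 ≤ c →
      IntervalIntegrable F MeasureTheory.volume a c := by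
    intro a c ha hc
    apply ContinuousOn.intervalIntegrable
    intro x hx
    rw [Set.mem_uIcc] at hx
    have hbx : (0:ℝ) ≤ x := by rcases hx with ⟨h1, h2⟩ | ⟨h1, h2⟩ <;> linarith
    exact (hFd x hbx).continuousAt.continuousWithinAt
  -- G
  set G : ℕ → ℂ := fun m => ∫ s in (m : ℝ)..((m : ℝ) + 1), F s with hGdef
  -- partial sums of G
  have hpartial : ∀ N : ℕ, ∑ m ∈ Finset.range N, G m = ∫ s in (0:ℝ)..(N:ℝ), F s := by
    intro N
    have h := intervalIntegral.sum_integral_adjacent_intervals (f := F)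
      (μ := MeasureTheory.volume) (a := fun i : ℕ => (i : ℝ)) (n := N)
      (fun k _ => hFint _ _ (by positivity) (by positivity))
    simp only [Nat.cast_zero, Nat.cast_add, Nat.cast_one] at h
    rw [← h]
  -- shift identity
  have hshift : ∀ N : ℕ, (∫ s in (0:ℝ)..(N:ℝ), F s) =
      (∫ x in (k₂ + 1 + (N:ℝ))..(k₁ + 1 + (N:ℝ)), P z q x) -
        ∫ x in (k₂ + 1)..(k₁ + 1), P z q x := by
    intro N
    have hint1 : IntervalIntegrable (fun s => P z q (k₁ + 1 + s))
        MeasureTheory.volume 0 (N:ℝ) := by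
      apply ContinuousOn.intervalIntegrable
      intro x hx
      rw [Set.mem_uIcc] at hx
      have hNnn : (0:ℝ) ≤ (N:ℝ) := Nat.cast_nonneg N
      have hbx : (0:ℝ) ≤ x := by rcases hx with ⟨h1, h2⟩ | ⟨h1, h2⟩ <;> linarith
      exact (HasDerivAt.comp_const_add _ x (hPd _ (hb1 x hbx))).continuousAt.continuousWithinAt
    have hint2 : IntervalIntegrable (fun s => P z q (k₂ + 1 + s))
        MeasureTheory.volume 0 (N:ℝ) := by
      apply ContinuousOn.intervalIntegrable
      intro x hx
      rw [Set.mem_uIcc] at hx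
      have hNnn : (0:ℝ) ≤ (N:ℝ) := Nat.cast_nonneg N
      have hbx : (0:ℝ) ≤ x := by rcases hx with ⟨h1, h2⟩ | ⟨h1, h2⟩ <;> linarith
      exact (HasDerivAt.comp_const_add _ x (hPd _ (hb2 x hbx))).continuousAt.continuousWithinAt
    have hsub : (∫ s in (0:ℝ)..(N:ℝ), F s) =
        (∫ s in (0:ℝ)..(N:ℝ), P z q (k₁ + 1 + s)) -
          ∫ s in (0:ℝ)..(N:ℝ), P z q (k₂ + 1 + s) :=
      intervalIntegral.integral_sub hint1 hint2
    rw [hsub, intervalIntegral.integral_comp_add_left (P z q) (k₁ + 1),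
      intervalIntegral.integral_comp_add_left (P z q) (k₂ + 1), add_zero, add_zero]
    have hNnn : (0:ℝ) ≤ (N:ℝ) := by positivity
    have i1 : IntervalIntegrable (P z q) MeasureTheory.volume (k₂+1) (k₁+1) :=
      hPint _ _ (le_refl b) (by rw [hbdef]; linarith)
    have i2 : IntervalIntegrable (P z q) MeasureTheory.volume (k₁+1) (k₁+1+(N:ℝ)) :=
      hPint _ _ (by rw [hbdef]; linarith) (by rw [hbdef]; linarith)
    have i3 : IntervalIntegrable (P z q) MeasureTheory.volume (k₂+1) (k₂+1+(N:ℝ)) :=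
      hPint _ _ (le_refl b) (by rw [hbdef]; linarith)
    have i4 : IntervalIntegrable (P z q) MeasureTheory.volume (k₂+1+(N:ℝ)) (k₁+1+(N:ℝ)) :=
      hPint _ _ (by rw [hbdef]; linarith) (by rw [hbdef]; linarith)
    have h₁ := intervalIntegral.integral_add_adjacent_intervals i1 i2
    have h₂ := intervalIntegral.integral_add_adjacent_intervals i3 i4
    linear_combination h₁ - h₂
  -- tail bound
  have htailbound : ∀ N : ℕ, ‖∫ x in (k₂ + 1 + (N:ℝ))..(k₁ + 1 + (N:ℝ)), P z q x‖ ≤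
      q ^ b / δ * (k₁ - k₂) * q ^ N := by
    intro N
    have hord : k₂ + 1 + (N:ℝ) ≤ k₁ + 1 + (N:ℝ) := by linarith
    have h := intervalIntegral.norm_integral_le_of_norm_le_const
      (C := q ^ (b + (N:ℝ)) / δ) (f := P z q) (a := k₂ + 1 + (N:ℝ)) (b := k₁ + 1 + (N:ℝ))
      (fun x hx => by
        rw [Set.uIoc_of_le hord] at hx
        have hbx : b + (N:ℝ) ≤ x := by rw [hbdef]; linarith [hx.1]
        exact (hnormP x (by rw [hbdef]; linarith [hx.1])).trans
          (div_le_div₀ (Real.rpow_nonneg hq0.le _) (hq_mono hbx) hδ le_rfl))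
    rw [_root_.abs_of_nonneg (by linarith : (0:ℝ) ≤ k₁ + 1 + (N:ℝ) - (k₂ + 1 + (N:ℝ)))] at h
    calc ‖∫ x in (k₂ + 1 + (N:ℝ))..(k₁ + 1 + (N:ℝ)), P z q x‖
        ≤ q ^ (b + (N:ℝ)) / δ * (k₁ + 1 + (N:ℝ) - (k₂ + 1 + (N:ℝ))) := h
    _ = q ^ b / δ * (k₁ - k₂) * q ^ N := by
        rw [Real.rpow_add hq0, Real.rpow_natCast]; ring
  -- geometric summability tools
  have hqnat : ∀ m : ℕ, q ^ ((m:ℝ)) = q ^ m := fun m => Real.rpow_natCast q m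
  have hgeo : Summable (fun m : ℕ => (q:ℝ) ^ m) := summable_geometric_of_lt_one hq0.le hq1
  -- summability of the log terms
  have hsP : ∀ k : ℝ, b ≤ k + 1 → Summable (fun m : ℕ => P z q (k + 1 + m)) := by
    intro k hbk
    apply Summable.of_norm_bounded (g := fun m : ℕ => q ^ (k+1) / δ * q ^ m)
      (hgeo.mul_left _)
    intro m
    have hbx : b ≤ k + 1 + (m:ℝ) := by
      have : (0:ℝ) ≤ (m:ℝ) := Nat.cast_nonneg m
      linarith
    refine (hnormP _ hbx).trans ?_
    rw [Real.rpow_add hq0, hqnat]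
    ring_nf
    exact le_refl _
  have hsP1 : Summable (fun m : ℕ => P z q (k₁ + 1 + m)) := hsP k₁ (by rw [hbdef]; linarith)
  have hsP2 : Summable (fun m : ℕ => P z q (k₂ + 1 + m)) := hsP k₂ (le_of_eq hbdef)
  have hsF : Summable (fun m : ℕ => F (m:ℝ)) := hsP1.sub hsP2
  -- bound on G terms, summability of G
  have hGbound : ∀ m : ℕ, ‖G m‖ ≤ 2 * q ^ b / δ * q ^ m := by
    intro m
    have hord : (m:ℝ) ≤ (m:ℝ) + 1 := by linarith
    have h := intervalIntegral.norm_integral_le_of_norm_le_const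
      (C := 2 * (q ^ (b + (m:ℝ)) / δ)) (f := F) (a := (m:ℝ)) (b := (m:ℝ)+1)
      (fun s hs => by
        rw [Set.uIoc_of_le hord] at hs
        have hms : (m:ℝ) ≤ s := hs.1.le
        have hs0 : (0:ℝ) ≤ s := le_trans (Nat.cast_nonneg m) hms
        have e1 : ‖P z q (k₁ + 1 + s)‖ ≤ q ^ (b + (m:ℝ)) / δ :=
          (hnormP _ (hb1 s hs0)).trans
            (div_le_div₀ (Real.rpow_nonneg hq0.le _)
              (hq_mono (by rw [hbdef]; linarith)) hδ le_rfl)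
        have e2 : ‖P z q (k₂ + 1 + s)‖ ≤ q ^ (b + (m:ℝ)) / δ :=
          (hnormP _ (hb2 s hs0)).trans
            (div_le_div₀ (Real.rpow_nonneg hq0.le _)
              (hq_mono (by rw [hbdef]; linarith)) hδ le_rfl)
        calc ‖F s‖ ≤ ‖P z q (k₁ + 1 + s)‖ + ‖P z q (k₂ + 1 + s)‖ := norm_sub_le _ _
        _ ≤ 2 * (q ^ (b + (m:ℝ)) / δ) := by linarith)
    have habs : |(m:ℝ) + 1 - (m:ℝ)| = 1 := by norm_num
    rw [habs, mul_one] at h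
    refine h.trans ?_
    rw [Real.rpow_add hq0, hqnat]
    ring_nf
    exact le_refl _
  have hGsum : Summable G :=
    Summable.of_norm_bounded (g := fun m : ℕ => 2 * q ^ b / δ * q ^ m)
      (hgeo.mul_left _) hGbound
  -- the telescoping limit: ∑' G = -∫_{k₂+1}^{k₁+1} P
  have hGts : (∑' m : ℕ, G m) = -(∫ x in (k₂+1)..(k₁+1), P z q x) := by
    have htail : Tendsto (fun N : ℕ => ∫ x in (k₂ + 1 + (N:ℝ))..(k₁ + 1 + (N:ℝ)), P z q x)
        atTop (𝓝 0) := by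
      apply squeeze_zero_norm htailbound
      have := (tendsto_pow_atTop_nhds_zero_of_lt_one hq0.le hq1).const_mul (q ^ b / δ * (k₁ - k₂))
      simpa using this
    have hlim : Tendsto (fun N : ℕ => ∑ m ∈ Finset.range N, G m) atTop
        (𝓝 (0 - ∫ x in (k₂+1)..(k₁+1), P z q x)) := by
      have := htail.sub_const (∫ x in (k₂+1)..(k₁+1), P z q x)
      refine this.congr fun N => ?_
      rw [hpartial N, hshift N]
    have := hGsum.hasSum.tendsto_sum_nat
    have := tendsto_nhds_unique this hlim
    rw [this, zero_sub]
  -- per-term error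
  have hFG : ∀ m : ℕ, ‖F (m:ℝ) - G m‖ ≤
      (k₁ - k₂) * Real.log q ^ 2 * q ^ b / δ ^ 2 * q ^ m := by
    intro m
    have hord : (m:ℝ) ≤ (m:ℝ) + 1 := by linarith
    set Cm : ℝ := Real.log q ^ 2 * q ^ (b + (m:ℝ)) / δ ^ 2 * (k₁ - k₂) with hCm
    have hFs : ∀ s ∈ Set.Icc (m:ℝ) ((m:ℝ)+1), ‖F s - F (m:ℝ)‖ ≤ Cm := by
      intro s hs
      have hmvt := Convex.norm_image_sub_le_of_norm_hasDerivWithin_le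
        (f := F) (f' := fun σ => Phi z q (k₁+1+σ) - Phi z q (k₂+1+σ))
        (s := Set.Icc (m:ℝ) ((m:ℝ)+1))
        (C := Cm)
        (fun σ hσ => (hFd σ (le_trans (Nat.cast_nonneg m) hσ.1)).hasDerivWithinAt)
        (fun σ hσ => by
          have hσ0 : (0:ℝ) ≤ σ := le_trans (Nat.cast_nonneg m) hσ.1
          refine (hPhidiff σ hσ0).trans ?_
          rw [hCm]
          have h1 : q ^ (b + σ) ≤ q ^ (b + (m:ℝ)) := hq_mono (by linarith [hσ.1])
          have h2 : Real.log q ^ 2 * q ^ (b + σ) / δ ^ 2 ≤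
              Real.log q ^ 2 * q ^ (b + (m:ℝ)) / δ ^ 2 :=
            div_le_div₀ (by positivity) (mul_le_mul_of_nonneg_left h1 (sq_nonneg _))
              (by positivity) le_rfl
          exact mul_le_mul_of_nonneg_right h2 hk')
        (convex_Icc _ _) (Set.left_mem_Icc.2 hord) hs
      have hCm0 : (0:ℝ) ≤ Cm := by
        rw [hCm]; exact mul_nonneg (by positivity) hk'
      have hsm : ‖s - (m:ℝ)‖ ≤ 1 := by
        rw [Real.norm_eq_abs, _root_.abs_of_nonneg (by linarith [hs.1])]
        linarith [hs.2]
      calc ‖F s - F (m:ℝ)‖ ≤ Cm * ‖s - (m:ℝ)‖ := hmvt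
      _ ≤ Cm * 1 := mul_le_mul_of_nonneg_left hsm hCm0
      _ = Cm := mul_one Cm
    have hconst : (∫ _s in (m:ℝ)..((m:ℝ)+1), F (m:ℝ)) = F (m:ℝ) := by
      rw [intervalIntegral.integral_const]
      norm_num
    have hFsub : F (m:ℝ) - G m = ∫ s in (m:ℝ)..((m:ℝ)+1), (F (m:ℝ) - F s) := by
      rw [intervalIntegral.integral_sub intervalIntegrable_const
        (hFint _ _ (Nat.cast_nonneg m) (by positivity)), hconst]
    have hnormFG := intervalIntegral.norm_integral_le_of_norm_le_const (C := Cm)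
      (f := fun s => F (m:ℝ) - F s) (a := (m:ℝ)) (b := (m:ℝ)+1)
      (fun s hs => by
        rw [Set.uIoc_of_le hord] at hs
        rw [norm_sub_rev]
        exact hFs s ⟨hs.1.le, hs.2⟩)
    rw [← hFsub] at hnormFG
    have habs2 : |(m:ℝ) + 1 - (m:ℝ)| = 1 := by norm_num
    rw [habs2, mul_one] at hnormFG
    refine hnormFG.trans ?_
    rw [hCm, Real.rpow_add hq0, hqnat]
    exact le_of_eq (by ring)
  -- E1 : bound on the series of errors
  have hE1 : ‖∑' m : ℕ, (F (m:ℝ) - G m)‖ ≤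
      (k₁ - k₂) * ρ / δ ^ 2 * (Real.log q ^ 2 / (1 - q)) := by
    have hgeo2 : HasSum (fun m : ℕ => (k₁ - k₂) * Real.log q ^ 2 * q ^ b / δ ^ 2 * q ^ m)
        ((k₁ - k₂) * Real.log q ^ 2 * q ^ b / δ ^ 2 * (1 - q)⁻¹) :=
      (hasSum_geometric_of_lt_one hq0.le hq1).mul_left _
    refine (tsum_of_norm_bounded hgeo2 hFG).trans ?_
    have hX : (0:ℝ) ≤ (k₁ - k₂) * Real.log q ^ 2 / δ ^ 2 * (1 - q)⁻¹ :=
      mul_nonneg (div_nonneg (mul_nonneg hk' (sq_nonneg _)) (by positivity)) (by positivity)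
    calc (k₁ - k₂) * Real.log q ^ 2 * q ^ b / δ ^ 2 * (1 - q)⁻¹
        = ((k₁ - k₂) * Real.log q ^ 2 / δ ^ 2 * (1 - q)⁻¹) * q ^ b := by ring
    _ ≤ ((k₁ - k₂) * Real.log q ^ 2 / δ ^ 2 * (1 - q)⁻¹) * ρ := mul_le_mul_of_nonneg_left hqb hX
    _ = (k₁ - k₂) * ρ / δ ^ 2 * (Real.log q ^ 2 / (1 - q)) := by
        rw [div_eq_mul_inv (Real.log q ^ 2) (1 - q)]; ring
  -- E2 : the integral is close to (k₁-k₂)·log(1-z)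
  have hintP : IntervalIntegrable (P z q) MeasureTheory.volume (k₂+1) (k₁+1) :=
    hPint _ _ (le_of_eq hbdef) (by rw [hbdef]; linarith)
  have hE2 : ‖(∫ x in (k₂+1)..(k₁+1), P z q x) - ((k₁ - k₂ : ℝ) : ℂ) * Complex.log (1 - z)‖ ≤
      (k₁ - k₂) / δ * (|q ^ (k₁ + 1) - 1| + |q ^ (k₂ + 1) - 1|) := by
    have hconst : ((k₁ - k₂ : ℝ) : ℂ) * Complex.log (1 - z) =
        ∫ _x in (k₂+1)..(k₁+1), Complex.log (1 - z) := by
      rw [intervalIntegral.integral_const, Complex.real_smul]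
      push_cast
      ring
    rw [hconst, ← intervalIntegral.integral_sub hintP intervalIntegrable_const]
    have hord : k₂ + 1 ≤ k₁ + 1 := by linarith
    have h := intervalIntegral.norm_integral_le_of_norm_le_const
      (C := 1 / δ * (|q ^ (k₁ + 1) - 1| + |q ^ (k₂ + 1) - 1|))
      (f := fun x => P z q x - Complex.log (1 - z)) (a := k₂+1) (b := k₁+1)
      (fun x hx => by
        rw [Set.uIoc_of_le hord] at hx
        have hbx : b ≤ x := le_of_lt (by rw [hbdef]; exact hx.1)
        have h1mem : (1:ℝ) ∈ Set.Icc (0:ℝ) ρ := ⟨zero_le_one, hρ.le⟩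
        have hl := lip_log hz1 hδ H (hmem x hbx) h1mem
        simp only [Complex.ofReal_one, one_mul] at hl
        have habs : |q ^ x - 1| ≤ |q ^ (k₁ + 1) - 1| + |q ^ (k₂ + 1) - 1| := by
          have t1 : q ^ x ≤ q ^ (k₂ + 1) := hq_mono (by linarith [hx.1])
          have t2 : q ^ (k₁ + 1) ≤ q ^ x := hq_mono (by linarith [hx.2])
          have u1 := le_abs_self (q ^ (k₂ + 1) - 1)
          have u2 := neg_abs_le (q ^ (k₁ + 1) - 1)
          have u3 := abs_nonneg (q ^ (k₁ + 1) - 1)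
          have u4 := abs_nonneg (q ^ (k₂ + 1) - 1)
          rw [abs_le]
          constructor <;> nlinarith
        simp only [P]
        calc ‖Complex.log (1 - ((q ^ x : ℝ) : ℂ) * z) - Complex.log (1 - z)‖
            ≤ 1 / δ * |q ^ x - 1| := hl
        _ ≤ 1 / δ * (|q ^ (k₁ + 1) - 1| + |q ^ (k₂ + 1) - 1|) :=
            mul_le_mul_of_nonneg_left habs (by positivity))
    refine h.trans (le_of_eq ?_)
    rw [_root_.abs_of_nonneg (by linarith : (0:ℝ) ≤ k₁ + 1 - (k₂ + 1))]
    ring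
  -- assemble
  have hAF : A z q k₁ - A z q k₂ = ∑' m : ℕ, F (m:ℝ) := (Summable.tsum_sub hsP1 hsP2).symm
  have hsplit : (A z q k₁ - A z q k₂) - ((k₂ - k₁ : ℝ) : ℂ) * Complex.log (1 - z) =
      (∑' m : ℕ, (F (m:ℝ) - G m)) -
        ((∫ x in (k₂+1)..(k₁+1), P z q x) - ((k₁ - k₂ : ℝ) : ℂ) * Complex.log (1 - z)) := by
    rw [hAF, Summable.tsum_sub hsF hGsum, hGts]
    push_cast
    ring
  rw [hsplit]
  exact (norm_sub_le _ _).trans (add_le_add hE1 hE2)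


lemma rpow_tendsto (a : ℝ) :
    Tendsto (fun q : ℝ => q ^ a) (𝓝[Set.Ioo (0:ℝ) 1] 1) (𝓝 1) := by
  have h := (Real.continuousAt_rpow_const 1 a (Or.inl one_ne_zero)).tendsto
  rw [Real.one_rpow] at h
  exact h.mono_left nhdsWithin_le_nhds

lemma tendsto_A_sub {z : ℂ} (hz1 : ‖z‖ ≤ 1) (hz2 : z ≠ 1) {k₁ k₂ : ℝ} (hk : k₂ ≤ k₁) :
    Tendsto (fun q : ℝ => A z q k₁ - A z q k₂) (𝓝[Set.Ioo (0:ℝ) 1] 1)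
      (𝓝 (((k₂ - k₁ : ℝ) : ℂ) * Complex.log (1 - z))) := by
  obtain ⟨ρ, δ, hρ, hδ, H⟩ := exists_rho_delta hz1 hz2
  rw [← tendsto_sub_nhds_zero_iff]
  have hev : ∀ᶠ q in 𝓝[Set.Ioo (0:ℝ) 1] (1:ℝ), q ∈ Set.Ioo (0:ℝ) 1 :=
    eventually_mem_nhdsWithin
  have hevb : ∀ᶠ q in 𝓝[Set.Ioo (0:ℝ) 1] (1:ℝ), q ^ (k₂ + 1) ≤ ρ :=
    ((rpow_tendsto (k₂+1)).eventually_lt_const hρ).mono (fun q h => h.le)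
  apply squeeze_zero_norm' (a := fun q : ℝ =>
    (k₁ - k₂) * ρ / δ ^ 2 * (Real.log q ^ 2 / (1 - q)) +
      (k₁ - k₂) / δ * (|q ^ (k₁ + 1) - 1| + |q ^ (k₂ + 1) - 1|))
  · filter_upwards [hev, hevb] with q hq hqb
    exact key_est hz1 hρ hδ H hq.1 hq.2 hk hqb
  · have hlog1 : Tendsto (fun q : ℝ => Real.log q) (𝓝[Set.Ioo (0:ℝ) 1] 1) (𝓝 0) := by
      have := (Real.continuousAt_log one_ne_zero).tendsto
      rw [Real.log_one] at this
      exact this.mono_left nhdsWithin_le_nhds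
    have hslope : Tendsto (fun q : ℝ => Real.log q / (q - 1)) (𝓝[Set.Ioo (0:ℝ) 1] 1) (𝓝 1) := by
      have hd : HasDerivAt Real.log 1 1 := by
        simpa using Real.hasDerivAt_log one_ne_zero
      have h1 := hasDerivAt_iff_tendsto_slope.1 hd
      have hsub : Set.Ioo (0:ℝ) 1 ⊆ {x : ℝ | x ≠ 1} := fun x hx => ne_of_lt hx.2
      have h2 := h1.mono_left (nhdsWithin_mono 1 hsub)
      refine h2.congr fun q => ?_
      rw [slope_def_field]
      simp [Real.log_one]
    have hsq : Tendsto (fun q : ℝ => Real.log q ^ 2 / (1 - q))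
        (𝓝[Set.Ioo (0:ℝ) 1] 1) (𝓝 0) := by
      have heq : (fun q : ℝ => Real.log q ^ 2 / (1 - q)) =
          fun q : ℝ => -(Real.log q * (Real.log q / (q - 1))) := by
        funext q
        rw [show (1:ℝ) - q = -(q - 1) by ring, div_neg, pow_two, mul_div_assoc]
      rw [heq]
      have := (hlog1.mul hslope).neg
      simpa using this
    have habs : ∀ a : ℝ, Tendsto (fun q : ℝ => |q ^ a - 1|)
        (𝓝[Set.Ioo (0:ℝ) 1] 1) (𝓝 0) := by
      intro a
      have := ((rpow_tendsto a).sub_const 1).abs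
      simpa using this
    have h1 := hsq.const_mul ((k₁ - k₂) * ρ / δ ^ 2)
    have h2 := (((habs (k₁+1)).add (habs (k₂+1))).const_mul ((k₁ - k₂) / δ))
    simpa using h1.add h2

lemma tendsto_A_sub' {z : ℂ} (hz1 : ‖z‖ ≤ 1) (hz2 : z ≠ 1) (k₁ k₂ : ℝ) :
    Tendsto (fun q : ℝ => A z q k₁ - A z q k₂) (𝓝[Set.Ioo (0:ℝ) 1] 1)
      (𝓝 (((k₂ - k₁ : ℝ) : ℂ) * Complex.log (1 - z))) := by
  rcases le_total k₂ k₁ with h | h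
  · exact tendsto_A_sub hz1 hz2 h
  · have h2 := (tendsto_A_sub hz1 hz2 h).neg
    have e1 : (fun q : ℝ => -(A z q k₂ - A z q k₁)) = fun q : ℝ => A z q k₁ - A z q k₂ := by
      funext q; ring
    have e2 : -(((k₁ - k₂ : ℝ) : ℂ) * Complex.log (1 - z)) =
        ((k₂ - k₁ : ℝ) : ℂ) * Complex.log (1 - z) := by push_cast; ring
    rw [e1, e2] at h2
    exact h2

lemma summable_logs {z : ℂ} {ρ δ : ℝ} (hz1 : ‖z‖ ≤ 1) (hρ : 1 < ρ) (hδ : 0 < δ)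
    (H : ∀ u : ℝ, u ∈ Set.Icc 0 ρ →
      (1 - (u : ℂ) * z) ∈ Complex.slitPlane ∧ δ ≤ ‖1 - (u : ℂ) * z‖)
    {q : ℝ} (hq0 : 0 < q) (hq1 : q < 1) {k b : ℝ} (hbk : b ≤ k + 1) (hqb : q ^ b ≤ ρ) :
    Summable (fun m : ℕ => P z q (k + 1 + m)) := by
  have hmem : ∀ x : ℝ, b ≤ x → (q ^ x : ℝ) ∈ Set.Icc 0 ρ := fun x hx =>
    ⟨Real.rpow_nonneg hq0.le x,
      le_trans (Real.rpow_le_rpow_of_exponent_ge hq0 hq1.le hx) hqb⟩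
  have hnormP : ∀ x : ℝ, b ≤ x → ‖P z q x‖ ≤ q ^ x / δ := by
    intro x hx
    have h0 : (0:ℝ) ∈ Set.Icc (0:ℝ) ρ := ⟨le_refl 0, by linarith⟩
    have h := lip_log hz1 hδ H (hmem x hx) h0
    simp only [Complex.ofReal_zero, zero_mul, sub_zero, Complex.log_one] at h
    rw [_root_.abs_of_nonneg (Real.rpow_nonneg hq0.le x)] at h
    simp only [P]
    calc ‖Complex.log (1 - ((q ^ x : ℝ) : ℂ) * z)‖ ≤ 1 / δ * q ^ x := h
    _ = q ^ x / δ := by ring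
  apply Summable.of_norm_bounded (g := fun m : ℕ => q ^ (k+1) / δ * q ^ m)
    ((summable_geometric_of_lt_one hq0.le hq1).mul_left _)
  intro m
  have hbx : b ≤ k + 1 + (m:ℝ) := by
    have : (0:ℝ) ≤ (m:ℝ) := Nat.cast_nonneg m
    linarith
  refine (hnormP _ hbx).trans ?_
  rw [Real.rpow_add hq0, Real.rpow_natCast]
  exact le_of_eq (by ring)

lemma factor_ne {z : ℂ} {ρ δ : ℝ} (hδ : 0 < δ)
    (H : ∀ u : ℝ, u ∈ Set.Icc 0 ρ →
      (1 - (u : ℂ) * z) ∈ Complex.slitPlane ∧ δ ≤ ‖1 - (u : ℂ) * z‖)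
    {q : ℝ} (hq0 : 0 < q) (hq1 : q < 1) {b x : ℝ} (hbx : b ≤ x) (hqb : q ^ b ≤ ρ) :
    (1 - ((q ^ x : ℝ) : ℂ) * z) ≠ 0 := by
  intro h
  have hmem : (q ^ x : ℝ) ∈ Set.Icc 0 ρ :=
    ⟨Real.rpow_nonneg hq0.le x,
      le_trans (Real.rpow_le_rpow_of_exponent_ge hq0 hq1.le hbx) hqb⟩
  have := (H _ hmem).2
  rw [h] at this
  simp only [norm_zero] at this
  linarith

lemma tprod_eq_cexp {z : ℂ} {ρ δ : ℝ} (hz1 : ‖z‖ ≤ 1) (hρ : 1 < ρ) (hδ : 0 < δ)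
    (H : ∀ u : ℝ, u ∈ Set.Icc 0 ρ →
      (1 - (u : ℂ) * z) ∈ Complex.slitPlane ∧ δ ≤ ‖1 - (u : ℂ) * z‖)
    {q : ℝ} (hq0 : 0 < q) (hq1 : q < 1) {k b : ℝ} (hbk : b ≤ k + 1) (hqb : q ^ b ≤ ρ) :
    (∏' m : ℕ, (1 - (q : ℂ) ^ (k : ℂ) * z * (q : ℂ) ^ (m + 1))) = Complex.exp (A z q k) := by
  have hfact : ∀ m : ℕ, (1 - (q : ℂ) ^ (k : ℂ) * z * (q : ℂ) ^ (m + 1)) =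
      1 - ((q ^ (k + 1 + (m:ℝ)) : ℝ) : ℂ) * z := by
    intro m
    have h1 : (q : ℂ) ^ (k : ℂ) = ((q ^ k : ℝ) : ℂ) := (Complex.ofReal_cpow hq0.le k).symm
    have h3 : q ^ (k + 1 + (m:ℝ)) = q ^ k * q ^ (m+1 : ℕ) := by
      rw [← Real.rpow_natCast q (m+1), ← Real.rpow_add hq0]
      push_cast
      ring_nf
    rw [h1, h3]
    push_cast
    ring
  have hne : ∀ (_x : Unit) (m : ℕ),
      (fun (m : ℕ) (_ : Unit) => 1 - ((q ^ (k + 1 + (m:ℝ)) : ℝ) : ℂ) * z) m _x ≠ 0 := by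
    intro _ m
    have hbx : b ≤ k + 1 + (m:ℝ) := by
      have : (0:ℝ) ≤ (m:ℝ) := Nat.cast_nonneg m
      linarith
    exact factor_ne hδ H hq0 hq1 hbx hqb
  have hsum : ∀ _x : Unit, Summable (fun m : ℕ =>
      Complex.log ((fun (m : ℕ) (_ : Unit) => 1 - ((q ^ (k + 1 + (m:ℝ)) : ℝ) : ℂ) * z) m _x)) :=
    fun _ => summable_logs hz1 hρ hδ H hq0 hq1 hbk hqb
  have h := Complex.cexp_tsum_eq_tprod
    (f := fun (m : ℕ) => 1 - ((q ^ (k + 1 + (m:ℝ)) : ℝ) : ℂ) * z) (hne ()) (hsum ())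
  calc (∏' m : ℕ, (1 - (q : ℂ) ^ (k : ℂ) * z * (q : ℂ) ^ (m + 1)))
      = ∏' m : ℕ, (1 - ((q ^ (k + 1 + (m:ℝ)) : ℝ) : ℂ) * z) := tprod_congr hfact
  _ = Complex.exp (A z q k) := h.symm

end QPoch

open QPoch

/-- Koornwinder's limit: for `z` in the closed unit disc, `z ≠ 1`,
`lim_{q↑1} (q^{k₁}z; q)_∞ / (q^{k₂}z; q)_∞ = (1 − z)^{k₂ − k₁}` (principal branch), where
`(a;q)_∞ = Π_{m=1}^∞ (1 − a qᵐ)`. -/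
theorem q_pochhammer_ratio_limit (k₁ k₂ : ℝ) (z : ℂ) (hz1 : ‖z‖ ≤ 1) (hz2 : z ≠ 1) :
    Tendsto (fun q : ℝ =>
        (∏' m : ℕ, (1 - (q : ℂ) ^ (k₁ : ℂ) * z * (q : ℂ) ^ (m + 1))) /
        (∏' m : ℕ, (1 - (q : ℂ) ^ (k₂ : ℂ) * z * (q : ℂ) ^ (m + 1))))
      (nhdsWithin 1 (Set.Ioo 0 1))
      (nhds ((1 - z) ^ ((k₂ : ℂ) - (k₁ : ℂ)))) := by
  have hz1' : ‖z‖ ≤ 1 := hz1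
  obtain ⟨ρ, δ, hρ, hδ, H⟩ := exists_rho_delta hz1' hz2
  have hT := tendsto_A_sub' hz1' hz2 k₁ k₂
  have hexp := (Complex.continuous_exp.tendsto _).comp hT
  have hval : Complex.exp (((k₂ - k₁ : ℝ) : ℂ) * Complex.log (1 - z)) =
      (1 - z) ^ ((k₂ : ℂ) - (k₁ : ℂ)) := by
    rw [Complex.cpow_def_of_ne_zero (sub_ne_zero.2 (Ne.symm hz2))]
    congr 1
    push_cast
    ring
  rw [hval] at hexp
  refine hexp.congr' ?_
  have hev : ∀ᶠ q in 𝓝[Set.Ioo (0:ℝ) 1] (1:ℝ), q ∈ Set.Ioo (0:ℝ) 1 :=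
    eventually_mem_nhdsWithin
  have hevb : ∀ᶠ q in 𝓝[Set.Ioo (0:ℝ) 1] (1:ℝ), q ^ (min k₁ k₂ + 1) ≤ ρ :=
    ((rpow_tendsto (min k₁ k₂ + 1)).eventually_lt_const hρ).mono (fun q h => h.le)
  filter_upwards [hev, hevb] with q hq hqb
  have hb1 : min k₁ k₂ + 1 ≤ k₁ + 1 := by
    have := min_le_left k₁ k₂; linarith
  have hb2 : min k₁ k₂ + 1 ≤ k₂ + 1 := by
    have := min_le_right k₁ k₂; linarith
  show Complex.exp (A z q k₁ - A z q k₂) = _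
  rw [Complex.exp_sub, ← tprod_eq_cexp hz1' hρ hδ H hq.1 hq.2 hb1 hqb,
    ← tprod_eq_cexp hz1' hρ hδ H hq.1 hq.2 hb2 hqb]
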